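/- If Σ ≤ H is malnormal and h ∈ H \ {1} is such that Cl_H(h) ∩ Σ ≠ ∅, then there exists σ₀ ∈ Σ \ {1} such that Cl_H(h) ∩ Σ equals the Σ-conjugacy class Cl_Σ(σ₀) = {τσ₀τ⁻¹ : τ ∈ Σ}. -/
import Mathlib


/-- A subgroup is malnormal if each conjugate by an element outside it meets it trivially. -/
def Malnormal {H : Type*} [Group H] (A : Subgroup H) : Prop :=
  ∀ g : H, g ∉ A → ∀ x ∈ A, g * x * g⁻¹ ∈ A → x = 1

/-- If `A` is malnormal and the conjugacy class of `h ≠ 1` meets `A`, then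
`Cl_H(h) ∩ A` is a single `A`-conjugacy class. -/
theorem malnormal_conj_class_inter {H : Type*} [Group H] (A : Subgroup H)
    (hmal : Malnormal A) (h : H) (hne : h ≠ 1)
    (hmeets : ∃ g : H, g * h * g⁻¹ ∈ A) :
    ∃ σ₀ : H, σ₀ ∈ A ∧ σ₀ ≠ 1 ∧
      {x : H | (∃ t : H, x = t * h * t⁻¹) ∧ x ∈ A}
        = {x : H | ∃ τ ∈ A, x = τ * σ₀ * τ⁻¹} := by
  obtain ⟨g, hg⟩ := hmeets
  refine ⟨g * h * g⁻¹, hg, ?_, ?_⟩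
  · intro h1
    apply hne
    have : h = g⁻¹ * (g * h * g⁻¹) * g := by group
    rw [this, h1]; group
  · ext x
    constructor
    · rintro ⟨⟨t, rfl⟩, hxA⟩
      refine ⟨t * g⁻¹, ?_, by group⟩
      by_contra hτ
      have hconj : (t * g⁻¹) * (g * h * g⁻¹) * (t * g⁻¹)⁻¹ ∈ A := by
        have : (t * g⁻¹) * (g * h * g⁻¹) * (t * g⁻¹)⁻¹ = t * h * t⁻¹ := by group
        rw [this]; exact hxA
      have := hmal (t * g⁻¹) hτ _ hg hconj
      apply hne
      have h2 : h = g⁻¹ * (g * h * g⁻¹) * g := by group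
      rw [h2, this]; group
    · rintro ⟨τ, hτ, rfl⟩
      exact ⟨⟨τ * g, by group⟩, A.mul_mem (A.mul_mem hτ hg) (A.inv_mem hτ)⟩
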